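/- Let d ≥ 1, ξ ∈ (0,1], and let u = (u_1,...,u_d) be a point of the unit simplex (u_j ≥ 0, Σ u_j = 1). Let 0 = u_(0) ≤ u_(1) ≤ ... ≤ u_(d) be the order statistics of (u_1,...,u_d) (with u_(0) := 0). Then (u_1^ξ + ... + u_d^ξ)^{1/ξ} ≥ Σ_{j=1}^{d} (d + 1 - j)^{1/ξ} · (u_(j) - u_(j-1)). -/

import Mathlib

open Finset

private theorem aux_monoOn {p : ℝ} (hp : 1 ≤ p) :
    MonotoneOn (fun x : ℝ => (x + 1) ^ p - x ^ p) (Set.Ici 0) := by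
  have hp0 : (0:ℝ) ≤ p := by linarith
  apply monotoneOn_of_deriv_nonneg (convex_Ici 0)
  · apply ContinuousOn.sub
    · exact fun x _ => ((Real.continuousAt_rpow_const _ _ (Or.inr hp0)).comp
        (by continuity : Continuous fun x : ℝ => x + 1).continuousAt).continuousWithinAt
    · exact fun x _ => (Real.continuousAt_rpow_const _ _ (Or.inr hp0)).continuousWithinAt
  · rw [interior_Ici]
    intro x hx
    have hx0 : (0:ℝ) < x := hx
    have d1 : HasDerivAt (fun x : ℝ => (x + 1) ^ p) (p * (x + 1) ^ (p - 1) * 1) x := by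
      exact (Real.hasDerivAt_rpow_const (Or.inl (by linarith))).comp x
        ((hasDerivAt_id x).add_const 1)
    have d2 : HasDerivAt (fun x : ℝ => x ^ p) (p * x ^ (p - 1)) x :=
      Real.hasDerivAt_rpow_const (Or.inl hx0.ne')
    exact (d1.sub d2).differentiableAt.differentiableWithinAt
  · rw [interior_Ici]
    intro x hx
    have hx0 : (0:ℝ) < x := hx
    have d1 : HasDerivAt (fun x : ℝ => (x + 1) ^ p) (p * (x + 1) ^ (p - 1) * 1) x := by
      exact (Real.hasDerivAt_rpow_const (Or.inl (by linarith))).comp x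
        ((hasDerivAt_id x).add_const 1)
    have d2 : HasDerivAt (fun x : ℝ => x ^ p) (p * x ^ (p - 1)) x :=
      Real.hasDerivAt_rpow_const (Or.inl hx0.ne')
    rw [show deriv (fun x : ℝ => (x + 1) ^ p - x ^ p) x = _ from (d1.sub d2).deriv]
    have : x ^ (p - 1) ≤ (x + 1) ^ (p - 1) :=
      Real.rpow_le_rpow hx0.le (by linarith) (by linarith)
    nlinarith

private theorem aux_two {p m x y : ℝ} (hp : 1 ≤ p) (hm : 0 ≤ m) (hy : 0 ≤ y)
    (hx : m * y ≤ x) : x ^ p + ((m + 1) ^ p - m ^ p) * y ^ p ≤ (x + y) ^ p := by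
  have hx0 : 0 ≤ x := le_trans (by positivity) hx
  rcases eq_or_lt_of_le hy with h | hy'
  · rw [← h]
    rw [Real.zero_rpow (by linarith : p ≠ 0)]
    simp
  · have hb : 0 ≤ x / y := by positivity
    have hab : m ≤ x / y := (le_div_iff₀ hy').mpr hx
    have key := aux_monoOn hp (Set.mem_Ici.mpr hm) (Set.mem_Ici.mpr hb) hab
    simp only at key
    have hyp : (0:ℝ) < y ^ p := Real.rpow_pos_of_pos hy' p
    have hmul := mul_le_mul_of_nonneg_right key hyp.le
    have e1 : (x / y) ^ p * y ^ p = x ^ p := by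
      rw [← Real.mul_rpow hb hy'.le, div_mul_cancel₀ _ hy'.ne']
    have e2 : (x / y + 1) ^ p * y ^ p = (x + y) ^ p := by
      have : x / y + 1 = (x + y) / y := by field_simp
      rw [this, ← Real.mul_rpow (by positivity) hy'.le, div_mul_cancel₀ _ hy'.ne']
    nlinarith

private theorem aux_key (ξ : ℝ) (hξ0 : 0 < ξ) (hξ1 : ξ ≤ 1) :
    ∀ n : ℕ, ∀ F : ℕ → ℝ, 0 ≤ F 0 → (∀ i j, i ≤ j → j ≤ n → F i ≤ F j) →
    (∑ j ∈ range n, ((n - j : ℕ) : ℝ) ^ (1 / ξ) * (F (j + 1) - F j))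
      + ((n : ℝ)) ^ (1 / ξ) * F 0
      ≤ (∑ j ∈ range n, F (j + 1) ^ ξ) ^ (1 / ξ) := by
  have hp : 1 ≤ 1 / ξ := by rw [le_div_iff₀ hξ0]; linarith
  have hpne : (1 / ξ : ℝ) ≠ 0 := by positivity
  intro n
  induction n with
  | zero =>
    intro F hF0 _
    simp only [range_zero, sum_empty, Nat.cast_zero, Real.zero_rpow hpne, zero_mul, zero_add,
      add_zero, le_refl]
  | succ n IH =>
    intro F hF0 hFmono
    have hF1 : 0 ≤ F 1 := le_trans hF0 (hFmono 0 1 (by omega) (by omega))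
    have hG := IH (fun k => F (k + 1)) hF1
      (fun i j hij hj => hFmono (i + 1) (j + 1) (by omega) (by omega))
    set S : ℝ := ∑ j ∈ range n, F (j + 1 + 1) ^ ξ with hS
    have hSx : (n : ℝ) * (F 1 ^ ξ) ≤ S := by
      have : ∀ j ∈ range n, F 1 ^ ξ ≥ F (j + 1 + 1) ^ ξ → True := fun _ _ _ => trivial
      calc (n : ℝ) * (F 1 ^ ξ) = ∑ _j ∈ range n, F 1 ^ ξ := by
            rw [Finset.sum_const, card_range, nsmul_eq_mul]
        _ ≤ S := by
            apply Finset.sum_le_sum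
            intro j hj
            exact Real.rpow_le_rpow hF1 (hFmono 1 (j + 1 + 1) (by omega)
              (by simp at hj; omega)) hξ0.le
    have hFξ : 0 ≤ F 1 ^ ξ := Real.rpow_nonneg hF1 ξ
    have h2 := aux_two hp (Nat.cast_nonneg n) hFξ hSx
    have hyp : (F 1 ^ ξ) ^ (1 / ξ) = F 1 := by
      rw [← Real.rpow_mul hF1, mul_one_div_cancel hξ0.ne', Real.rpow_one]
    -- rewrite goal
    rw [Finset.sum_range_succ' (fun j => ((n + 1 - j : ℕ) : ℝ) ^ (1 / ξ) * (F (j + 1) - F j)),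
        Finset.sum_range_succ' (fun j => F (j + 1) ^ ξ)]
    simp only [Nat.sub_zero, Nat.succ_sub_succ_eq_sub]
    have hcast : ((n + 1 : ℕ) : ℝ) = (n : ℝ) + 1 := by push_cast; ring
    rw [hcast]
    calc (∑ j ∈ range n, ((n - j : ℕ) : ℝ) ^ (1 / ξ) * (F (j + 1 + 1) - F (j + 1)))
          + ((n : ℝ) + 1) ^ (1 / ξ) * (F (0 + 1) - F 0) + ((n : ℝ) + 1) ^ (1 / ξ) * F 0
        = (∑ j ∈ range n, ((n - j : ℕ) : ℝ) ^ (1 / ξ) * (F (j + 1 + 1) - F (j + 1)))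
          + ((n : ℝ) : ℝ) ^ (1 / ξ) * F 1 + (((n : ℝ) + 1) ^ (1 / ξ) - (n : ℝ) ^ (1 / ξ)) * F 1 := by
          ring
      _ ≤ S ^ (1 / ξ) + (((n : ℝ) + 1) ^ (1 / ξ) - (n : ℝ) ^ (1 / ξ)) * (F 1 ^ ξ) ^ (1 / ξ) := by
          rw [hyp]; linarith [hG]
      _ ≤ (S + F 1 ^ ξ) ^ (1 / ξ) := by
          have hS0 : 0 ≤ S := le_trans (by positivity) hSx
          have := aux_two hp (Nat.cast_nonneg n) hFξ hSx
          calc S ^ (1 / ξ) + (((n : ℝ) + 1) ^ (1 / ξ) - (n : ℝ) ^ (1 / ξ)) * (F 1 ^ ξ) ^ (1 / ξ)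
              ≤ (S + F 1 ^ ξ) ^ (1 / ξ) := this
      _ = (∑ j ∈ range n, F (j + 1 + 1) ^ ξ + F (0 + 1) ^ ξ) ^ (1 / ξ) := by norm_num [hS]

/-- Primal feasibility inequality (A.8): for `u` in the unit simplex and
`0 = u_(0) ≤ u_(1) ≤ ⋯ ≤ u_(d)` the order statistics of `u`,
`(Σ_j u_j^ξ)^{1/ξ} ≥ Σ_{j=1}^d (d+1-j)^{1/ξ} (u_(j) - u_(j-1))`.
Here `v : Fin (d+1) → ℝ` encodes the order statistics: `v 0 = 0`, `v` is monotone,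
and `(v 1, …, v d)` is a permutation of `(u 1, …, u d)`. -/
theorem simplex_order_statistics_lower_bound (d : ℕ) (hd : 1 ≤ d)
    (ξ : ℝ) (hξ0 : 0 < ξ) (hξ1 : ξ ≤ 1)
    (u : Fin d → ℝ) (hu0 : ∀ j, 0 ≤ u j) (hu1 : ∑ j, u j = 1)
    (v : Fin (d + 1) → ℝ) (hv0 : v 0 = 0) (hvmono : Monotone v)
    (σ : Equiv.Perm (Fin d)) (hσ : ∀ j : Fin d, v j.succ = u (σ j)) :
    (∑ j, (u j) ^ ξ) ^ (1 / ξ)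
      ≥ ∑ j : Fin d, ((d - (j : ℕ) : ℕ) : ℝ) ^ (1 / ξ) * (v j.succ - v j.castSucc) := by
  set F : ℕ → ℝ := fun k => v ⟨min k d, Nat.lt_succ_of_le (min_le_right k d)⟩ with hF
  have hF0 : F 0 = 0 := by
    have : (⟨min 0 d, Nat.lt_succ_of_le (min_le_right 0 d)⟩ : Fin (d + 1)) = 0 := by
      apply Fin.ext; simp
    rw [hF]; simp only; rw [this, hv0]
  have hFmono : ∀ i j : ℕ, i ≤ j → j ≤ d → F i ≤ F j := by
    intro i j hij _
    exact hvmono (by simp [Fin.le_def]; omega)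
  have key := aux_key ξ hξ0 hξ1 d F (le_of_eq hF0.symm) hFmono
  rw [hF0, mul_zero, add_zero] at key
  have e1 : ∀ j : Fin d, F ((j : ℕ) + 1) = v j.succ := by
    intro j
    have hj := j.isLt
    simp only [hF]
    congr 1
    apply Fin.ext
    simp only [Fin.val_succ]
    omega
  have e2 : ∀ j : Fin d, F (j : ℕ) = v j.castSucc := by
    intro j
    have hj := j.isLt
    simp only [hF]
    congr 1
    apply Fin.ext
    simp only [Fin.coe_castSucc]
    omega
  have hsum1 : (∑ j : Fin d, ((d - (j : ℕ) : ℕ) : ℝ) ^ (1 / ξ) * (v j.succ - v j.castSucc))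
      = ∑ j ∈ range d, ((d - j : ℕ) : ℝ) ^ (1 / ξ) * (F (j + 1) - F j) := by
    rw [← Fin.sum_univ_eq_sum_range (fun j => ((d - j : ℕ) : ℝ) ^ (1 / ξ) * (F (j + 1) - F j)) d]
    exact Finset.sum_congr rfl fun j _ => by rw [e1 j, e2 j]
  have hsum2 : ∑ j ∈ range d, F (j + 1) ^ ξ = ∑ j, (u j) ^ ξ := by
    rw [← Fin.sum_univ_eq_sum_range (fun j => F (j + 1) ^ ξ) d]
    calc ∑ j : Fin d, F ((j : ℕ) + 1) ^ ξ = ∑ j : Fin d, u (σ j) ^ ξ :=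
          Finset.sum_congr rfl fun j _ => by rw [e1 j, hσ j]
      _ = ∑ j, (u j) ^ ξ := Equiv.sum_comp σ (fun i => u i ^ ξ)
  rw [ge_iff_le, hsum1, ← hsum2]
  exact key
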